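/- For any universal coupling f : Δ(Ω) × [0,1] → Ω on a finite sample space Ω and any integer k with 1 ≤ k < |Ω|, there exist distributions p, q on Ω with d_TV(p,q) = 1/k such that Pr_{R~Unif[0,1]}[f(p,R) = f(q,R)] ≤ (k−1)/(k+1) = (1 − d_TV(p,q))/(1 + d_TV(p,q)). -/

import Mathlib

section Aux

open Finset

lemma stmt11_sq_bound (k m s : ℕ) (hm1 : 1 ≤ m) (hmk : m ≤ k) (hms : m + s = k + 1) :
    m * m + s * s ≤ k * k + 1 := by nlinarith

lemma stmt11_sum_sq (k : ℕ) (n : Fin (k+1) → ℕ)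
    (hsum : ∑ j, n j = k + 1) (hle : ∀ j, n j ≤ k) :
    ∑ j, n j * n j ≤ k * k + 1 := by
  obtain ⟨j₀, -, hj₀⟩ : ∃ j ∈ Finset.univ, n j ≠ 0 := by
    apply Finset.exists_ne_zero_of_sum_ne_zero
    rw [hsum]; omega
  have key : ∑ j ∈ univ.erase j₀, n j * n j
      ≤ (∑ j ∈ univ.erase j₀, n j) * (∑ j ∈ univ.erase j₀, n j) := by
    calc ∑ j ∈ univ.erase j₀, n j * n j
        ≤ ∑ j ∈ univ.erase j₀, n j * (∑ l ∈ univ.erase j₀, n l) := by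
          apply Finset.sum_le_sum
          intro j hj
          exact Nat.mul_le_mul_left _ (Finset.single_le_sum (fun l _ => Nat.zero_le _) hj)
      _ = _ := by rw [← Finset.sum_mul]
  have h1 : n j₀ * n j₀ + ∑ j ∈ univ.erase j₀, n j * n j = ∑ j, n j * n j :=
    Finset.add_sum_erase _ (fun j => n j * n j) (Finset.mem_univ j₀)
  have h2 : n j₀ + ∑ j ∈ univ.erase j₀, n j = k + 1 := by
    rw [Finset.add_sum_erase _ _ (Finset.mem_univ j₀), hsum]
  have := stmt11_sq_bound k (n j₀) (∑ j ∈ univ.erase j₀, n j) (by omega) (hle j₀) h2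
  omega

lemma stmt11_count {Ω : Type*} [DecidableEq Ω] (k : ℕ)
    (e : Fin (k+1) → Ω) (he : Function.Injective e)
    (g : Fin (k+1) → Ω) (hg : ∀ i, ∃ j, j ≠ i ∧ g i = e j) :
    ((Finset.univ.offDiag).filter (fun p : Fin (k+1) × Fin (k+1) => g p.1 = g p.2)).card
      ≤ k * k - k := by
  choose φ hφne hφ using hg
  set F : Fin (k+1) → Finset (Fin (k+1)) := fun j => univ.filter (fun i => φ i = j) with hF
  have hgiff : ∀ i i', g i = g i' ↔ φ i = φ i' := by
    intro i i'
    rw [hφ i, hφ i']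
    exact ⟨fun h => he h, fun h => by rw [h]⟩
  have key : (Finset.univ.offDiag).filter (fun p : Fin (k+1) × Fin (k+1) => g p.1 = g p.2)
      = univ.biUnion (fun j => (F j).offDiag) := by
    ext p
    simp only [Finset.mem_filter, Finset.mem_offDiag, Finset.mem_biUnion, Finset.mem_univ,
      true_and, hF, hgiff]
    constructor
    · rintro ⟨hne, heq⟩
      exact ⟨φ p.1, by tauto⟩
    · rintro ⟨j, h1, h2, hne⟩
      exact ⟨hne, h1.trans h2.symm⟩
  rw [key, Finset.card_biUnion]
  · have hcard : ∀ j, (F j).offDiag.card = (F j).card * (F j).card - (F j).card :=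
      fun j => Finset.offDiag_card _
    have hsum : ∑ j, (F j).card = k + 1 := by
      rw [← Finset.card_eq_sum_card_fiberwise (fun i _ => Finset.mem_univ (φ i))]
      simp
    have hle : ∀ j, (F j).card ≤ k := by
      intro j
      have : F j ⊆ univ.erase j := by
        intro i hi
        simp only [hF, Finset.mem_filter] at hi
        exact Finset.mem_erase.2 ⟨by rw [← hi.2]; exact (hφne i).symm, Finset.mem_univ i⟩
      calc (F j).card ≤ (univ.erase j).card := Finset.card_le_card this
        _ = k := by rw [Finset.card_erase_of_mem (Finset.mem_univ j)]; simp
    have hsq : ∑ j, (F j).card * (F j).card ≤ k * k + 1 := by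
      simpa using stmt11_sum_sq k (fun j => (F j).card) (by simpa using hsum) hle
    calc ∑ j, (F j).offDiag.card = ∑ j, ((F j).card * (F j).card - (F j).card) := by
          exact Finset.sum_congr rfl fun j _ => hcard j
      _ = (∑ j, (F j).card * (F j).card) - ∑ j, (F j).card := by
          refine Finset.sum_tsub_distrib _ fun j _ => ?_
          rcases Nat.eq_zero_or_pos (F j).card with h | h
          · simp [h]
          · exact Nat.le_mul_of_pos_left _ h
      _ ≤ k * k - k := by omega
  · intro j _ j' _ hjj'
    rw [Function.onFun, Finset.disjoint_left]
    intro p hp hp'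
    have h1 := (Finset.mem_offDiag.1 hp).1
    have h2 := (Finset.mem_offDiag.1 hp').1
    simp only [hF, Finset.mem_filter] at h1 h2
    exact hjj' (h1.2.symm.trans h2.2)
end Aux

noncomputable def stmt11_mu {Ω : Type*} [DecidableEq Ω] (k : ℕ) (e : Fin (k+1) → Ω)
    (i : Fin (k+1)) (x : Ω) : ℝ :=
  ∑ j ∈ Finset.univ.erase i, if e j = x then (1/(k:ℝ)) else 0

lemma stmt11_mu_nonneg {Ω : Type*} [DecidableEq Ω] (k : ℕ) (e : Fin (k+1) → Ω)
    (i : Fin (k+1)) (x : Ω) : 0 ≤ stmt11_mu k e i x := by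
  apply Finset.sum_nonneg
  intro j _
  split_ifs <;> positivity

lemma stmt11_mu_sum {Ω : Type*} [Fintype Ω] [DecidableEq Ω] (k : ℕ) (hk : 1 ≤ k)
    (e : Fin (k+1) → Ω) (i : Fin (k+1)) : ∑ x, stmt11_mu k e i x = 1 := by
  unfold stmt11_mu
  rw [Finset.sum_comm]
  have h : ∀ j ∈ Finset.univ.erase i, (∑ x, if e j = x then (1/(k:ℝ)) else 0) = 1/(k:ℝ) := by
    intro j _
    rw [Finset.sum_ite_eq]
    simp
  rw [Finset.sum_congr rfl h, Finset.sum_const, Finset.card_erase_of_mem (Finset.mem_univ i)]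
  simp only [Finset.card_univ, Fintype.card_fin, Nat.add_sub_cancel, nsmul_eq_mul]
  have : (k:ℝ) ≠ 0 := by positivity
  field_simp

lemma stmt11_mu_zero {Ω : Type*} [DecidableEq Ω] (k : ℕ) (e : Fin (k+1) → Ω)
    (i : Fin (k+1)) (x : Ω) (hx : ∀ j, j ≠ i → e j ≠ x) : stmt11_mu k e i x = 0 := by
  apply Finset.sum_eq_zero
  intro j hj
  rw [if_neg (hx j (Finset.mem_erase.1 hj).1)]

lemma stmt11_mu_diff {Ω : Type*} [DecidableEq Ω] (k : ℕ) (e : Fin (k+1) → Ω)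
    (i j : Fin (k+1)) (x : Ω) :
    stmt11_mu k e i x - stmt11_mu k e j x
      = (if e j = x then (1/(k:ℝ)) else 0) - (if e i = x then (1/(k:ℝ)) else 0) := by
  have h : ∀ l : Fin (k+1), stmt11_mu k e l x + (if e l = x then (1/(k:ℝ)) else 0)
      = ∑ m, if e m = x then (1/(k:ℝ)) else 0 := by
    intro l
    unfold stmt11_mu
    rw [Finset.sum_erase_add _ _ (Finset.mem_univ l)]
  linarith [h i, h j]

lemma stmt11_mu_tv {Ω : Type*} [Fintype Ω] [DecidableEq Ω] (k : ℕ) (hk : 1 ≤ k)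
    (e : Fin (k+1) → Ω) (he : Function.Injective e) {i j : Fin (k+1)} (hij : i ≠ j) :
    ∑ x, |stmt11_mu k e i x - stmt11_mu k e j x| = 2/(k:ℝ) := by
  have hne : e i ≠ e j := fun h => hij (he h)
  have hk0 : (0:ℝ) < 1/(k:ℝ) := by
    have hkp : 0 < k := hk
    have : (0:ℝ) < (k:ℝ) := by exact_mod_cast hkp
    positivity
  have hpt : ∀ x, |stmt11_mu k e i x - stmt11_mu k e j x|
      = (if e i = x then (1/(k:ℝ)) else 0) + (if e j = x then (1/(k:ℝ)) else 0) := by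
    intro x
    rw [stmt11_mu_diff]
    rcases eq_or_ne (e i) x with hi | hi <;> rcases eq_or_ne (e j) x with hjx | hjx
    · exact absurd (hi.trans hjx.symm) hne
    · rw [if_pos hi, if_neg hjx, zero_sub, abs_neg, abs_of_nonneg hk0.le, add_zero]
    · rw [if_neg hi, if_pos hjx, sub_zero, abs_of_nonneg hk0.le, zero_add]
    · rw [if_neg hi, if_neg hjx]
      simp
  rw [Finset.sum_congr rfl (fun x _ => hpt x), Finset.sum_add_distrib]
  rw [Finset.sum_ite_eq, Finset.sum_ite_eq]
  simp
  ring

open MeasureTheory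
open scoped ENNReal

theorem stmt_11 {Ω : Type*} [Fintype Ω] [DecidableEq Ω] [MeasurableSpace Ω]
    [MeasurableSingletonClass Ω]
    (f : (Ω → ℝ) → ℝ → Ω) (hfm : ∀ p, Measurable (f p))
    (huniv : ∀ p : Ω → ℝ, (∀ x, 0 ≤ p x) → (∑ x, p x = 1) → ∀ x : Ω,
      (volume.restrict (Set.Icc (0:ℝ) 1)) {r | f p r = x} = ENNReal.ofReal (p x))
    (k : ℕ) (hk1 : 1 ≤ k) (hk2 : k < Fintype.card Ω) :
    ∃ p q : Ω → ℝ, (∀ x, 0 ≤ p x) ∧ (∑ x, p x = 1) ∧ (∀ x, 0 ≤ q x) ∧ (∑ x, q x = 1) ∧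
      (1/2) * ∑ x, |p x - q x| = 1/(k:ℝ) ∧
      (volume.restrict (Set.Icc (0:ℝ) 1)) {r | f p r = f q r}
        ≤ ENNReal.ofReal (((k:ℝ) - 1)/((k:ℝ) + 1)) := by
  classical
  obtain ⟨e⟩ : Nonempty (Fin (k+1) ↪ Ω) :=
    Function.Embedding.nonempty_of_card_le (by simpa using hk2)
  set ν := volume.restrict (Set.Icc (0:ℝ) 1) with hνdef
  set μ : Fin (k+1) → Ω → ℝ := fun i => stmt11_mu k (⇑e) i with hμdef
  have hμ0 : ∀ i x, 0 ≤ μ i x := fun i x => stmt11_mu_nonneg k (⇑e) i x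
  have hμ1 : ∀ i, ∑ x, μ i x = 1 := fun i => stmt11_mu_sum k hk1 (⇑e) i
  have hmeas : ∀ i x, ν {r | f (μ i) r = x} = ENNReal.ofReal (μ i x) :=
    fun i x => huniv _ (hμ0 i) (hμ1 i) x
  -- volume of the interval
  have hν1 : ν Set.univ = 1 := by
    rw [hνdef, Measure.restrict_apply MeasurableSet.univ, Set.univ_inter, Real.volume_Icc]
    norm_num
  -- bad sets
  set Z : Fin (k+1) → Set ℝ := fun i => {r | ∀ j, j ≠ i → f (μ i) r ≠ e j} with hZdef
  have hZ : ∀ i, ν (Z i) = 0 := by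
    intro i
    apply measure_mono_null
      (h := Set.subset_def.mpr ?_)
      (t := ⋃ (x : Ω) (_ : ∀ j, j ≠ i → e j ≠ x), {r | f (μ i) r = x})
    · refine measure_iUnion_null fun x => measure_iUnion_null fun hx => ?_
      rw [hmeas i x]
      have hzz : μ i x = 0 := stmt11_mu_zero k (⇑e) i x hx
      rw [hzz]
      simp
    · intro r hr
      refine Set.mem_iUnion.2 ⟨f (μ i) r, Set.mem_iUnion.2 ⟨?_, rfl⟩⟩
      intro j hj h
      exact hr j hj h.symm
  have hZae : ∀ᵐ r ∂ν, r ∉ ⋃ i, Z i :=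
    measure_eq_zero_iff_ae_notMem.mp (measure_iUnion_null hZ)
  -- agreement sets
  set A : Fin (k+1) × Fin (k+1) → Set ℝ :=
    fun p => {r | f (μ p.1) r = f (μ p.2) r} with hAdef
  have hA : ∀ p, MeasurableSet (A p) := by
    intro p
    have h : A p = ⋃ x : Ω, f (μ p.1) ⁻¹' {x} ∩ f (μ p.2) ⁻¹' {x} := by
      ext r
      simp only [hAdef, Set.mem_setOf_eq, Set.mem_iUnion, Set.mem_inter_iff, Set.mem_preimage,
        Set.mem_singleton_iff]
      exact ⟨fun h => ⟨f (μ p.2) r, h, rfl⟩, fun ⟨x, h1, h2⟩ => h1.trans h2.symm⟩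
    rw [h]
    exact MeasurableSet.iUnion fun x =>
      ((hfm _) (measurableSet_singleton x)).inter ((hfm _) (measurableSet_singleton x))
  set S := (Finset.univ : Finset (Fin (k+1))).offDiag with hSdef
  -- the key bound on the sum of the measures
  have hsum : ∑ p ∈ S, ν (A p) ≤ ((k*k - k : ℕ) : ℝ≥0∞) := by
    have h1 : ∀ p ∈ S, ν (A p) = ∫⁻ r, (A p).indicator 1 r ∂ν :=
      fun p _ => (lintegral_indicator_one (hA p)).symm
    rw [Finset.sum_congr rfl h1, ← lintegral_finset_sum _ (fun p _ => measurable_one.indicator (hA p))]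
    calc ∫⁻ r, ∑ p ∈ S, (A p).indicator 1 r ∂ν
        ≤ ∫⁻ _, ((k*k - k : ℕ) : ℝ≥0∞) ∂ν := by
          apply lintegral_mono_ae
          filter_upwards [hZae] with r hr
          have hg : ∀ i, ∃ j, j ≠ i ∧ f (μ i) r = e j := by
            intro i
            have : r ∉ Z i := fun h => hr (Set.mem_iUnion.2 ⟨i, h⟩)
            simp only [hZdef, Set.mem_setOf_eq, not_forall] at this
            obtain ⟨j, hj, h⟩ := this
            exact ⟨j, hj, not_not.mp h⟩
          have hcount := stmt11_count k (⇑e) e.injective (fun i => f (μ i) r) hg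
          have heq : ∑ p ∈ S, (A p).indicator 1 r
              = ((S.filter (fun p => f (μ p.1) r = f (μ p.2) r)).card : ℝ≥0∞) := by
            rw [Finset.sum_indicator_eq_sum_filter]
            simp only [Pi.one_apply, Finset.sum_const, nsmul_eq_mul, mul_one]
            norm_cast
          rw [heq]
          exact_mod_cast hcount
      _ = ((k*k - k : ℕ) : ℝ≥0∞) := by rw [lintegral_const, hν1, mul_one]
  -- pick the minimizing pair
  have hSne : S.Nonempty := by
    refine ⟨(⟨0, by omega⟩, ⟨1, by omega⟩), ?_⟩
    simp only [hSdef, Finset.mem_offDiag, Finset.mem_univ, true_and]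
    simp [Fin.ext_iff]
  obtain ⟨p₀, hp₀, hmin⟩ := S.exists_min_image (fun p => ν (A p)) hSne
  have hcard : S.card = k*k + k := by
    rw [hSdef, Finset.offDiag_card, Finset.card_univ, Fintype.card_fin]
    ring_nf
    omega
  have hle : ((k*k + k : ℕ) : ℝ≥0∞) * ν (A p₀) ≤ ((k*k - k : ℕ) : ℝ≥0∞) := by
    calc ((k*k + k : ℕ) : ℝ≥0∞) * ν (A p₀) = S.card • ν (A p₀) := by
          rw [hcard, nsmul_eq_mul]
      _ ≤ ∑ p ∈ S, ν (A p) := Finset.card_nsmul_le_sum S _ _ (fun p hp => hmin p hp)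
      _ ≤ _ := hsum
  have hkR : (1:ℝ) ≤ (k:ℝ) := by exact_mod_cast hk1
  have hrw : ((k*k - k : ℕ) : ℝ≥0∞)
      = ((k*k + k : ℕ) : ℝ≥0∞) * ENNReal.ofReal (((k:ℝ) - 1)/((k:ℝ) + 1)) := by
    rw [← ENNReal.ofReal_natCast, ← ENNReal.ofReal_natCast,
      ← ENNReal.ofReal_mul (by positivity)]
    congr 1
    have hsub : k ≤ k * k := Nat.le_mul_of_pos_left k (by omega)
    push_cast [Nat.cast_sub hsub]
    have hne : (k:ℝ) + 1 ≠ 0 := by positivity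
    field_simp
  have hfinal : ν (A p₀) ≤ ENNReal.ofReal (((k:ℝ) - 1)/((k:ℝ) + 1)) := by
    rw [hrw] at hle
    refine (ENNReal.mul_le_mul_iff_right ?_ ?_).mp hle
    · simp only [ne_eq, Nat.cast_eq_zero]
      omega
    · exact ENNReal.natCast_ne_top _
  have hne : p₀.1 ≠ p₀.2 := (Finset.mem_offDiag.1 hp₀).2.2
  refine ⟨μ p₀.1, μ p₀.2, hμ0 _, hμ1 _, hμ0 _, hμ1 _, ?_, hfinal⟩
  rw [hμdef]
  rw [stmt11_mu_tv k hk1 (⇑e) e.injective hne]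
  have : (k:ℝ) ≠ 0 := by positivity
  field_simp
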